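/- Let A ∈ ℝⁿˣⁿ be a real symmetric matrix with nonnegative entries and at most one positive eigenvalue. Then for every v ∈ ℝⁿ with nonnegative entries and every real t ≥ 1, the matrix (vᵀAv)·A − t·(Av)(Av)ᵀ is negative semidefinite. -/

import Mathlib

open Matrix

private lemma key_sum {n : ℕ} (lam : Fin n → ℝ)
    (hsub : ∀ i j, 0 < lam i → 0 < lam j → i = j)
    (y z : Fin n → ℝ) (hy : 0 ≤ ∑ i, lam i * (y i * y i)) :
    (∑ i, lam i * (y i * y i)) * (∑ i, lam i * (z i * z i)) ≤ (∑ i, lam i * (y i * z i)) ^ 2 := by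
  by_cases hex : ∃ k, 0 < lam k
  · obtain ⟨k, hk⟩ := hex
    have hneg : ∀ i, i ≠ k → lam i ≤ 0 := by
      intro i hi
      by_contra h
      exact hi (hsub i k (lt_of_not_ge h) hk)
    set μ : Fin n → ℝ := fun i => if i = k then 0 else -lam i with hμdef
    have hμ : ∀ i, 0 ≤ μ i := by
      intro i
      by_cases h : i = k
      · simp [hμdef, h]
      · simp only [hμdef, if_neg h]
        linarith [hneg i h]
    have hsplit : ∀ x x' : Fin n → ℝ,
        ∑ i, lam i * (x i * x' i) = lam k * (x k * x' k) - ∑ i, μ i * (x i * x' i) := by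
      intro x x'
      have h1 : ∑ i, (lam i * (x i * x' i) + μ i * (x i * x' i)) = lam k * (x k * x' k) := by
        rw [Finset.sum_eq_single k]
        · simp [hμdef]
        · intro i _ hi
          simp only [hμdef, if_neg hi]
          ring
        · simp
      rw [Finset.sum_add_distrib] at h1
      linarith
    have hCS : (∑ i, μ i * (y i * z i)) ^ 2 ≤
        (∑ i, μ i * (y i * y i)) * (∑ i, μ i * (z i * z i)) := by
      have e : ∀ (x x' : Fin n → ℝ) (i : Fin n),
          (Real.sqrt (μ i) * x i) * (Real.sqrt (μ i) * x' i) = μ i * (x i * x' i) := by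
        intro x x' i
        rw [show (Real.sqrt (μ i) * x i) * (Real.sqrt (μ i) * x' i)
            = (Real.sqrt (μ i) * Real.sqrt (μ i)) * (x i * x' i) by ring,
          Real.mul_self_sqrt (hμ i)]
      have h := Finset.sum_mul_sq_le_sq_mul_sq Finset.univ
        (fun i => Real.sqrt (μ i) * y i) (fun i => Real.sqrt (μ i) * z i)
      simp only [pow_two] at h ⊢
      calc (∑ i, μ i * (y i * z i)) * (∑ i, μ i * (y i * z i))
          = (∑ i, (Real.sqrt (μ i) * y i) * (Real.sqrt (μ i) * z i)) *
            (∑ i, (Real.sqrt (μ i) * y i) * (Real.sqrt (μ i) * z i)) := by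
            rw [Finset.sum_congr rfl fun i _ => (e y z i).symm]
        _ ≤ _ := by
            refine le_trans h (le_of_eq ?_)
            congr 1
            · exact Finset.sum_congr rfl fun i _ => e y y i
            · exact Finset.sum_congr rfl fun i _ => e z z i
    have hNy : 0 ≤ ∑ i, μ i * (y i * y i) :=
      Finset.sum_nonneg fun i _ => mul_nonneg (hμ i) (mul_self_nonneg _)
    have hNz : 0 ≤ ∑ i, μ i * (z i * z i) :=
      Finset.sum_nonneg fun i _ => mul_nonneg (hμ i) (mul_self_nonneg _)
    rw [hsplit y y] at hy ⊢
    rw [hsplit z z, hsplit y z]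
    set Ny := ∑ i, μ i * (y i * y i)
    set Nz := ∑ i, μ i * (z i * z i)
    set Nyz := ∑ i, μ i * (y i * z i)
    rcases eq_or_lt_of_le hy with hp | hp
    · rw [← hp, zero_mul]
      positivity
    · rcases eq_or_lt_of_le hNy with h0 | h0
      · have hz0 : Nyz = 0 := by nlinarith
        rw [hz0, ← h0]
        nlinarith [mul_nonneg (mul_nonneg hk.le (mul_self_nonneg (y k))) hNz]
      · nlinarith [mul_nonneg hk.le (sq_nonneg (y k * Nyz - z k * Ny)),
          mul_nonneg hp.le (sub_nonneg.2 hCS)]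
  · push_neg at hex
    have h1 : ∑ i, lam i * (y i * y i) ≤ 0 :=
      Finset.sum_nonpos fun i _ => mul_nonpos_of_nonpos_of_nonneg (hex i) (mul_self_nonneg _)
    rw [le_antisymm h1 hy, zero_mul]
    positivity

/-- If `A` is a real symmetric `n × n` matrix with nonnegative entries and at most one
positive eigenvalue, then for every nonnegative vector `v` and every `t ≥ 1`, the matrix
`(vᵀAv) • A - t • (Av)(Av)ᵀ` is negative semidefinite. -/
theorem nonneg_one_pos_eigenvalue_negSemidef
    {n : ℕ} (A : Matrix (Fin n) (Fin n) ℝ) (hA : A.IsHermitian)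
    (hnonneg : ∀ i j, 0 ≤ A i j)
    (hone : Fintype.card {i : Fin n // 0 < hA.eigenvalues i} ≤ 1)
    (v : Fin n → ℝ) (hv : ∀ i, 0 ≤ v i) (t : ℝ) (ht : 1 ≤ t) :
    ∀ w : Fin n → ℝ,
      w ⬝ᵥ ((v ⬝ᵥ A.mulVec v) • A - t • vecMulVec (A.mulVec v) (A.mulVec v)).mulVec w ≤ 0 := by
  intro w
  set U : Matrix (Fin n) (Fin n) ℝ := (hA.eigenvectorUnitary : Matrix (Fin n) (Fin n) ℝ) with hU
  -- representation of the bilinear form in eigencoordinates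
  have hrepr : ∀ x x' : Fin n → ℝ,
      x ⬝ᵥ A.mulVec x' = ∑ i, hA.eigenvalues i *
        ((star U).mulVec x i * (star U).mulVec x' i) := by
    intro x x'
    conv_lhs => rw [hA.spectral_theorem, Unitary.conjStarAlgAut_apply]
    rw [← mulVec_mulVec, ← mulVec_mulVec, dotProduct_mulVec]
    have h1 : x ᵥ* U = (star U) *ᵥ x := by
      rw [← mulVec_transpose]
      congr 1
    rw [h1]
    simp only [mulVec_diagonal, dotProduct]
    exact Finset.sum_congr rfl fun i _ => by simp; ring
  have hsub : ∀ i j, 0 < hA.eigenvalues i → 0 < hA.eigenvalues j → i = j := by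
    intro i j hi hj
    have := Fintype.card_le_one_iff.mp hone ⟨i, hi⟩ ⟨j, hj⟩
    exact congrArg Subtype.val this
  -- nonnegativity of vᵀAv
  have hp : 0 ≤ v ⬝ᵥ A.mulVec v := by
    simp only [dotProduct, mulVec]
    refine Finset.sum_nonneg fun i _ => mul_nonneg (hv i) ?_
    exact Finset.sum_nonneg fun j _ => mul_nonneg (hnonneg i j) (hv j)
  -- symmetry: (Av) ⬝ w = v ⬝ (Aw)
  have hAt : Aᵀ = A := hA
  have hsym : (A.mulVec v) ⬝ᵥ w = v ⬝ᵥ A.mulVec w := by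
    rw [dotProduct_mulVec, ← mulVec_transpose, hAt]
  -- expand the goal
  have hexp : w ⬝ᵥ ((v ⬝ᵥ A.mulVec v) • A - t • vecMulVec (A.mulVec v) (A.mulVec v)).mulVec w
      = (v ⬝ᵥ A.mulVec v) * (w ⬝ᵥ A.mulVec w) - t * (v ⬝ᵥ A.mulVec w) ^ 2 := by
    rw [sub_mulVec, dotProduct_sub, smul_mulVec, smul_mulVec,
      dotProduct_smul, dotProduct_smul, smul_eq_mul, smul_eq_mul]
    congr 1
    have h2 : ∀ q : Fin n → ℝ, vecMulVec q q *ᵥ w = (q ⬝ᵥ w) • q := by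
      intro q
      ext i
      simp only [mulVec, vecMulVec_apply, dotProduct, Pi.smul_apply, smul_eq_mul,
        Finset.sum_mul]
      exact Finset.sum_congr rfl fun j _ => by ring
    rw [h2 (A.mulVec v), dotProduct_smul, smul_eq_mul, hsym, dotProduct_comm w (A.mulVec v), hsym]
    ring
  rw [hexp]
  have key := key_sum hA.eigenvalues hsub ((star U).mulVec v) ((star U).mulVec w)
    (by rw [← hrepr v v]; exact hp)
  rw [← hrepr v v, ← hrepr w w, ← hrepr v w] at key
  nlinarith [sq_nonneg (v ⬝ᵥ A.mulVec w), mul_nonneg (sub_nonneg.2 ht) (sq_nonneg (v ⬝ᵥ A.mulVec w))]
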